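/- For any permutations π, ρ in S_n, the function Q_{πρ}(t_1,...,t_n) satisfies the multiplicative cocycle identity: Q_{πρ}(t_1,...,t_n) = Q_ρ(t_1,...,t_n) · Q_π(t_{ρ^{-1}(1)},...,t_{ρ^{-1}(n)}) whenever πρ has length |π|+|ρ| (lengths add). -/

import Mathlib

/-- Number of inversions (= length) of a permutation of `Fin n`. -/
def inversions {n : ℕ} (π : Equiv.Perm (Fin n)) : ℕ :=
  (Finset.univ.filter (fun p : Fin n × Fin n => p.1 < p.2 ∧ π p.2 < π p.1)).card

/-- `Q_π(t_1,…,t_n) = ∏_{i<j, π(i)>π(j)} Q(t_i,t_j)`. -/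
def Qpi {T : Type*} (Q : T → T → ℂ) {n : ℕ} (π : Equiv.Perm (Fin n)) (t : Fin n → T) : ℂ :=
  ∏ p ∈ Finset.univ.filter (fun p : Fin n × Fin n => p.1 < p.2 ∧ π p.2 < π p.1),
    Q (t p.1) (t p.2)

open Finset

/-- multiplicative cocycle identity for `Q_{πρ}` when lengths add. -/
theorem Qpi_mul_of_length_add {T : Type*} (Q : T → T → ℂ)
    (hherm : ∀ s t, (starRingEnd ℂ) (Q t s) = Q s t)
    (habs : ∀ s t, ‖Q s t‖ = 1)
    (n : ℕ) (π ρ : Equiv.Perm (Fin n))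
    (hlen : inversions (π * ρ) = inversions π + inversions ρ)
    (t : Fin n → T) :
    Qpi Q (π * ρ) t = Qpi Q ρ t * Qpi Q π (t ∘ ⇑ρ⁻¹) := by
  classical
  set σ := π * ρ with hσ
  have hσapp : ∀ i, σ i = π (ρ i) := fun i => rfl
  set Sρ : Finset (Fin n × Fin n) :=
    univ.filter (fun p => p.1 < p.2 ∧ ρ p.2 < ρ p.1) with hSρ
  set Sσ : Finset (Fin n × Fin n) :=
    univ.filter (fun p => p.1 < p.2 ∧ σ p.2 < σ p.1) with hSσ
  set B : Finset (Fin n × Fin n) :=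
    univ.filter (fun p => p.1 < p.2 ∧ ρ p.2 < ρ p.1 ∧ σ p.1 < σ p.2) with hB
  set C : Finset (Fin n × Fin n) :=
    univ.filter (fun p => p.1 < p.2 ∧ ρ p.1 < ρ p.2 ∧ σ p.2 < σ p.1) with hC
  -- σ injectivity facts
  have hρne : ∀ p : Fin n × Fin n, p.1 < p.2 → ρ p.1 ≠ ρ p.2 := by
    intro p h hq; exact absurd (ρ.injective hq) (ne_of_lt h)
  have hσne : ∀ p : Fin n × Fin n, p.1 < p.2 → σ p.1 ≠ σ p.2 := by
    intro p h hq; exact absurd (σ.injective hq) (ne_of_lt h)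
  -- card splitting of Sσ
  have h1 : Sσ.card = (Sσ.filter (fun p => ρ p.2 < ρ p.1)).card
      + (Sσ.filter (fun p => ¬ ρ p.2 < ρ p.1)).card :=
    (Finset.card_filter_add_card_filter_not _).symm
  have hSσ1 : Sσ.filter (fun p => ρ p.2 < ρ p.1) = Sρ ∩ Sσ := by
    ext p
    simp only [hSρ, hSσ, mem_filter, mem_inter, mem_univ, true_and]
    tauto
  have hSσ2 : Sσ.filter (fun p => ¬ ρ p.2 < ρ p.1) = C := by
    ext p
    simp only [hSσ, hC, mem_filter, mem_univ, true_and]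
    constructor
    · rintro ⟨⟨h1, h2⟩, h3⟩
      exact ⟨h1, lt_of_le_of_ne (not_lt.mp h3) (hρne p h1), h2⟩
    · rintro ⟨h1, h2, h3⟩
      exact ⟨⟨h1, h3⟩, not_lt.mpr h2.le⟩
  -- card splitting of Sρ
  have h2 : Sρ.card = (Sρ.filter (fun p => σ p.2 < σ p.1)).card
      + (Sρ.filter (fun p => ¬ σ p.2 < σ p.1)).card :=
    (Finset.card_filter_add_card_filter_not _).symm
  have hSρ1 : Sρ.filter (fun p => σ p.2 < σ p.1) = Sρ ∩ Sσ := by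
    ext p
    simp only [hSρ, hSσ, mem_filter, mem_inter, mem_univ, true_and]
    tauto
  have hSρ2 : Sρ.filter (fun p => ¬ σ p.2 < σ p.1) = B := by
    ext p
    simp only [hSρ, hB, mem_filter, mem_univ, true_and]
    constructor
    · rintro ⟨⟨h1, h2⟩, h3⟩
      exact ⟨h1, h2, lt_of_le_of_ne (not_lt.mp h3) (hσne p h1)⟩
    · rintro ⟨h1, h2, h3⟩
      exact ⟨⟨h1, h2⟩, not_lt.mpr h3.le⟩
  -- inversions π = B.card + C.card
  set Iπ : Finset (Fin n × Fin n) :=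
    univ.filter (fun p : Fin n × Fin n => p.1 < p.2 ∧ π p.2 < π p.1) with hIπ
  have h3 : Iπ.card = (Iπ.filter (fun p => ρ⁻¹ p.1 < ρ⁻¹ p.2)).card
      + (Iπ.filter (fun p => ¬ ρ⁻¹ p.1 < ρ⁻¹ p.2)).card :=
    (Finset.card_filter_add_card_filter_not _).symm
  have hCcard : (Iπ.filter (fun p => ρ⁻¹ p.1 < ρ⁻¹ p.2)).card = C.card := by
    apply Finset.card_bij' (fun p _ => (ρ⁻¹ p.1, ρ⁻¹ p.2)) (fun q _ => (ρ q.1, ρ q.2))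
    · intro p hp
      simp only [hIπ, mem_filter, mem_univ, true_and] at hp
      obtain ⟨⟨h1, h2⟩, h3⟩ := hp
      simp only [hC, mem_filter, mem_univ, true_and]
      refine ⟨h3, ?_, ?_⟩
      · simpa using h1
      · simpa [hσapp] using h2
    · intro q hq
      simp only [hC, mem_filter, mem_univ, true_and] at hq
      obtain ⟨h1, h2, h3⟩ := hq
      simp only [hIπ, mem_filter, mem_univ, true_and]
      refine ⟨⟨h2, ?_⟩, ?_⟩
      · simpa [hσapp] using h3
      · simpa using h1
    · intro p _; simp
    · intro q _; simp
  have hBcard : (Iπ.filter (fun p => ¬ ρ⁻¹ p.1 < ρ⁻¹ p.2)).card = B.card := by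
    apply Finset.card_bij' (fun p _ => (ρ⁻¹ p.2, ρ⁻¹ p.1)) (fun q _ => (ρ q.2, ρ q.1))
    · intro p hp
      simp only [hIπ, mem_filter, mem_univ, true_and] at hp
      obtain ⟨⟨h1, h2⟩, h3⟩ := hp
      have hne : ρ⁻¹ p.1 ≠ ρ⁻¹ p.2 := by
        intro hq; exact absurd (ρ⁻¹.injective hq) (ne_of_lt h1)
      have h4 : ρ⁻¹ p.2 < ρ⁻¹ p.1 := lt_of_le_of_ne (not_lt.mp h3) (Ne.symm hne)
      simp only [hB, mem_filter, mem_univ, true_and]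
      refine ⟨h4, ?_, ?_⟩
      · simpa using h1
      · simpa [hσapp] using h2
    · intro q hq
      simp only [hB, mem_filter, mem_univ, true_and] at hq
      obtain ⟨h1, h2, h3⟩ := hq
      simp only [hIπ, mem_filter, mem_univ, true_and]
      refine ⟨⟨h2, ?_⟩, ?_⟩
      · simpa [hσapp] using h3
      · simp only [Equiv.Perm.inv_def, Equiv.symm_apply_apply]
        exact not_lt.mpr h1.le
    · intro p _; simp
    · intro q _; simp
  have hinvπ : inversions π = B.card + C.card := by
    unfold inversions
    rw [← hIπ, h3, hCcard, hBcard, Nat.add_comm]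
  have hinvρ : inversions ρ = Sρ.card := rfl
  have hinvσ : inversions σ = Sσ.card := rfl
  -- deduce B = ∅
  have hBempty : B = ∅ := by
    have : (Sρ ∩ Sσ).card + C.card = (B.card + C.card) + ((Sρ ∩ Sσ).card + B.card) := by
      have e1 := hlen
      rw [hinvσ, hinvπ, hinvρ, h1, hSσ1, hSσ2, h2, hSρ1, hSρ2] at e1
      exact e1
    have hB0 : B.card = 0 := by omega
    exact Finset.card_eq_zero.mp hB0
  -- split Sσ = Sρ ∪ C
  have hdisj : Disjoint Sρ C := by
    rw [Finset.disjoint_left]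
    intro p hp hq
    simp only [hSρ, mem_filter, mem_univ, true_and] at hp
    simp only [hC, mem_filter, mem_univ, true_and] at hq
    exact absurd hq.2.1 (not_lt.mpr hp.2.le)
  have hunion : Sσ = Sρ ∪ C := by
    ext p
    simp only [hSρ, hSσ, hC, mem_union, mem_filter, mem_univ, true_and]
    constructor
    · rintro ⟨h1, h2⟩
      rcases lt_or_gt_of_ne (hρne p h1) with hρlt | hρgt
      · exact Or.inr ⟨h1, hρlt, h2⟩
      · exact Or.inl ⟨h1, hρgt⟩
    · rintro (⟨h1, h2⟩ | ⟨h1, h2, h3⟩)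
      · refine ⟨h1, ?_⟩
        by_contra h3
        have : p ∈ B := by
          simp only [hB, mem_filter, mem_univ, true_and]
          exact ⟨h1, h2, lt_of_le_of_ne (not_lt.mp h3) (hσne p h1)⟩
        rw [hBempty] at this
        exact absurd this (Finset.notMem_empty p)
      · exact ⟨h1, h3⟩
  -- final product computation
  have hprodC : ∏ p ∈ C, Q (t p.1) (t p.2) = Qpi Q π (t ∘ ⇑ρ⁻¹) := by
    unfold Qpi
    apply Finset.prod_bij' (fun p _ => (ρ p.1, ρ p.2)) (fun q _ => (ρ⁻¹ q.1, ρ⁻¹ q.2))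
    · intro p hp
      simp only [hC, mem_filter, mem_univ, true_and] at hp
      obtain ⟨h1, h2, h3⟩ := hp
      simp only [mem_filter, mem_univ, true_and]
      exact ⟨h2, by simpa [hσapp] using h3⟩
    · intro q hq
      simp only [mem_filter, mem_univ, true_and] at hq
      obtain ⟨h1, h2⟩ := hq
      have hne : ρ⁻¹ q.1 ≠ ρ⁻¹ q.2 := fun hq' =>
        absurd (ρ⁻¹.injective hq') (ne_of_lt h1)
      have hlt : ρ⁻¹ q.1 < ρ⁻¹ q.2 := by
        rcases lt_or_gt_of_ne hne with h | h
        · exact h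
        · exfalso
          have : (ρ⁻¹ q.2, ρ⁻¹ q.1) ∈ B := by
            simp only [hB, mem_filter, mem_univ, true_and]
            exact ⟨h, by simpa using h1, by simpa [hσapp] using h2⟩
          rw [hBempty] at this
          exact absurd this (Finset.notMem_empty _)
      simp only [hC, mem_filter, mem_univ, true_and]
      exact ⟨hlt, by simpa using h1, by simpa [hσapp] using h2⟩
    · intro p _; simp
    · intro q _; simp
    · intro p _; simp [Function.comp]
  calc Qpi Q σ t = ∏ p ∈ Sσ, Q (t p.1) (t p.2) := rfl
    _ = ∏ p ∈ Sρ ∪ C, Q (t p.1) (t p.2) := by rw [hunion]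
    _ = (∏ p ∈ Sρ, Q (t p.1) (t p.2)) * ∏ p ∈ C, Q (t p.1) (t p.2) :=
        Finset.prod_union hdisj
    _ = Qpi Q ρ t * Qpi Q π (t ∘ ⇑ρ⁻¹) := by rw [hprodC]; rfl
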